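/- Let k₀, k₁ ∈ ℂ₋ (lower half-plane) with |k₁| ≥ |k₀| and Re(k₁²) ≤ Re(k₀²). Set S(k) = ((k - k₁)(k + conj k₁))/((k - k₀)(k + conj k₀)). Then |S(k)| ≥ 1 for every real k. -/

import Mathlib

/-- For `k₀, k₁` in the lower half-plane with `|k₁| ≥ |k₀|` and
`Re k₁² ≤ Re k₀²`, the function
`S k = (k - k₁)(k + conj k₁)/((k - k₀)(k + conj k₀))` satisfies `|S| ≥ 1` on `ℝ`. -/
theorem stmt7 (k₀ k₁ : ℂ) (h₀ : k₀.im < 0) (h₁ : k₁.im < 0)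
    (habs : ‖k₀‖ ≤ ‖k₁‖)
    (hre : (k₁ ^ 2).re ≤ (k₀ ^ 2).re)
    (S : ℂ → ℂ)
    (hS : S = fun k => ((k - k₁) * (k + starRingEnd ℂ k₁)) /
      ((k - k₀) * (k + starRingEnd ℂ k₀))) :
    ∀ x : ℝ, 1 ≤ ‖S x‖ := by
  intro x
  subst hS
  simp only
  have hc : ∀ k : ℂ, ‖((x : ℂ) + starRingEnd ℂ k)‖
      = ‖((x : ℂ) + k)‖ := by
    intro k
    rw [← Complex.norm_conj ((x : ℂ) + k)]
    simp
  rw [norm_div, norm_mul, norm_mul, hc, hc, ← norm_mul, ← norm_mul]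
  have he : ∀ k : ℂ, ((x : ℂ) - k) * ((x : ℂ) + k) = (x : ℂ) ^ 2 - k ^ 2 := by
    intro k; ring
  rw [he, he]
  have hne : (x : ℂ) ^ 2 - k₀ ^ 2 ≠ 0 := by
    have h1 : (x : ℂ) - k₀ ≠ 0 := by
      intro h
      have := congrArg Complex.im h
      simp at this
      linarith
    have h2 : (x : ℂ) + k₀ ≠ 0 := by
      intro h
      have := congrArg Complex.im h
      simp at this
      linarith
    have := mul_ne_zero h1 h2
    rwa [he] at this
  have hpos : 0 < ‖((x : ℂ) ^ 2 - k₀ ^ 2)‖ := by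
    simpa [norm_pos_iff] using hne
  rw [one_le_div hpos]
  have hsq : ‖((x : ℂ) ^ 2 - k₀ ^ 2)‖ ^ 2
      ≤ ‖((x : ℂ) ^ 2 - k₁ ^ 2)‖ ^ 2 := by
    rw [Complex.sq_norm, Complex.sq_norm]
    have hN : Complex.normSq k₀ ≤ Complex.normSq k₁ := by
      have := mul_self_le_mul_self (norm_nonneg k₀) habs
      simpa [← Complex.sq_norm, pow_two] using this
    have hN0 : 0 ≤ Complex.normSq k₀ := Complex.normSq_nonneg _
    have hx : (0:ℝ) ≤ x ^ 2 := sq_nonneg x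
    simp only [Complex.normSq_apply, Complex.sub_re, Complex.sub_im, pow_two,
      Complex.mul_re, Complex.mul_im, Complex.ofReal_re, Complex.ofReal_im] at *
    nlinarith [sq_nonneg (k₀.re * k₀.re - k₀.im * k₀.im),
      sq_nonneg (k₁.re * k₁.re - k₁.im * k₁.im)]
  nlinarith [norm_nonneg ((x : ℂ) ^ 2 - k₀ ^ 2),
    norm_nonneg ((x : ℂ) ^ 2 - k₁ ^ 2)]
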